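/- Let f₀ ∈ C_p(Z) be such that |f₀| does not attain its supremum, i.e., for every x ∈ Z there exists y ∈ Z with |f₀(x)| < |f₀(y)|. Then the one-dimensional subspace Y = span{f₀} does not have property-SNP in C_p(Z) with respect to 𝒫. -/
import Mathlib


open scoped ENNReal

noncomputable section

/-- The space `C_p(Z)` of continuous real-valued functions on `Z`, as a submodule of
`Z → ℝ`; its subspace topology is the topology of pointwise convergence. -/
def Cp (Z : Type*) [TopologicalSpace Z] : Submodule ℝ (Z → ℝ) where
  carrier := {f | Continuous f}
  add_mem' hf hg := hf.add hg
  zero_mem' := continuous_const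
  smul_mem' c f hf := hf.const_smul c

/-- The generating seminorm `ρ_F(f) = max_{x ∈ F} |f x|` of the topology of
pointwise convergence, for a finite `F ⊆ Z`. -/
def rhoP {Z : Type*} [TopologicalSpace Z] (F : Finset Z) (f : Cp Z) : ℝ :=
  ⨆ x ∈ F, |(f : Z → ℝ) x|

/-- `χ_ρ(g) = sup { |g v| : ρ v ≤ 1 } ∈ [0,∞]`. -/
def chi {V : Type*} [AddCommGroup V] [Module ℝ V] [TopologicalSpace V]
    (ρ : V → ℝ) (g : V →L[ℝ] ℝ) : ℝ≥0∞ :=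
  ⨆ v ∈ {v : V | ρ v ≤ 1}, ENNReal.ofReal |g v|

/-- `χ_ρ^W(f)` for a functional `f` on a subspace `W`. -/
def chiSub {V : Type*} [AddCommGroup V] [Module ℝ V] [TopologicalSpace V]
    (W : Submodule ℝ V) (ρ : V → ℝ) (f : W →L[ℝ] ℝ) : ℝ≥0∞ :=
  chi (fun w : W => ρ (w : V)) f

/-- `ft` is a Hahn-Banach extension of the pair `(f, ρ)` on the subspace `W`. -/
def IsHBE {V : Type*} [AddCommGroup V] [Module ℝ V] [TopologicalSpace V]
    (W : Submodule ℝ V) (ρ : V → ℝ) (f : W →L[ℝ] ℝ) (ft : V →L[ℝ] ℝ) : Prop :=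
  ft.comp W.subtypeL = f ∧ chi ρ ft = chiSub W ρ f

/-- Property-SNP of a subspace `W` with respect to the family `p` of seminorms. -/
def SNP {V : Type*} [AddCommGroup V] [Module ℝ V] [TopologicalSpace V]
    {ι : Type*} (p : ι → V → ℝ) (W : Submodule ℝ V) : Prop :=
  ∀ f : W →L[ℝ] ℝ, ∃ i, chiSub W (p i) f < ⊤ ∧ ∃ ft : V →L[ℝ] ℝ,
    ∀ j, (∀ v, p i v ≤ p j v) →
      IsHBE W (p j) f ft ∧ ∀ g : V →L[ℝ] ℝ, IsHBE W (p j) f g → g = ft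

section Aux

variable {Z : Type*} [TopologicalSpace Z] [Nonempty Z]

lemma rhoP_le {F : Finset Z} {f : Cp Z} {M : ℝ} (hM : 0 ≤ M)
    (h : ∀ x ∈ F, |(f : Z → ℝ) x| ≤ M) : rhoP F f ≤ M := by
  refine Real.iSup_le (fun x => ?_) hM
  by_cases hx : x ∈ F
  · rw [ciSup_pos hx]; exact h x hx
  · haveI : IsEmpty (x ∈ F) := ⟨hx⟩
    rw [Real.iSup_of_isEmpty]
    exact hM

lemma rhoP_nonneg (F : Finset Z) (f : Cp Z) : 0 ≤ rhoP F f :=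
  Real.iSup_nonneg fun _ => Real.iSup_nonneg fun _ => abs_nonneg _

lemma le_rhoP {F : Finset Z} {f : Cp Z} {x : Z} (hx : x ∈ F) :
    |(f : Z → ℝ) x| ≤ rhoP F f := by
  have hbdd : BddAbove (Set.range fun z : Z => ⨆ _ : z ∈ F, |(f : Z → ℝ) z|) := by
    refine ⟨∑ a ∈ F, |(f : Z → ℝ) a|, ?_⟩
    rintro y ⟨z, rfl⟩
    show (⨆ _ : z ∈ F, |(f : Z → ℝ) z|) ≤ ∑ a ∈ F, |(f : Z → ℝ) a|
    exact Real.iSup_le (fun hz => Finset.single_le_sum (f := fun a => |(f : Z → ℝ) a|) (fun a _ => abs_nonneg _) hz)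
      (Finset.sum_nonneg fun a _ => abs_nonneg _)
  calc |(f : Z → ℝ) x| = ⨆ _ : x ∈ F, |(f : Z → ℝ) x| :=
        (ciSup_pos (f := fun _ : x ∈ F => |(f : Z → ℝ) x|) hx).symm
    _ ≤ rhoP F f := le_ciSup hbdd x

lemma rhoP_smul_le (F : Finset Z) (c : ℝ) (f : Cp Z) :
    rhoP F (c • f) ≤ |c| * rhoP F f := by
  refine rhoP_le (mul_nonneg (abs_nonneg _) (rhoP_nonneg F f)) fun x hx => ?_
  have hco : ((c • f : Cp Z) : Z → ℝ) x = c * (f : Z → ℝ) x := rfl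
  rw [hco, abs_mul]
  exact mul_le_mul_of_nonneg_left (le_rhoP hx) (abs_nonneg c)

lemma chi_bound {F : Finset Z} {ft : Cp Z →L[ℝ] ℝ} {B : ℝ} (hB : 0 ≤ B)
    (hchi : chi (rhoP F) ft ≤ ENNReal.ofReal B) {h : Cp Z} {r : ℝ} (hr : 0 < r)
    (hρ : rhoP F h ≤ r) : |ft h| ≤ B * r := by
  have hmem : r⁻¹ • h ∈ {v : Cp Z | rhoP F v ≤ 1} := by
    have h1 := rhoP_smul_le F r⁻¹ h
    have h2 : |r⁻¹| * rhoP F h ≤ 1 := by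
      rw [abs_of_pos (inv_pos.mpr hr)]
      have : r⁻¹ * rhoP F h ≤ r⁻¹ * r :=
        mul_le_mul_of_nonneg_left hρ (le_of_lt (inv_pos.mpr hr))
      rwa [inv_mul_cancel₀ (ne_of_gt hr)] at this
    exact le_trans h1 h2
  have hle : ENNReal.ofReal |ft (r⁻¹ • h)| ≤ ENNReal.ofReal B := by
    refine le_trans ?_ hchi
    simp only [chi]
    exact le_iSup₂ (f := fun v (_ : v ∈ {v : Cp Z | rhoP F v ≤ 1}) =>
      ENNReal.ofReal |ft v|) (r⁻¹ • h) hmem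
  have hre : |ft (r⁻¹ • h)| ≤ B := (ENNReal.ofReal_le_ofReal_iff hB).mp hle
  have hsm : ft (r⁻¹ • h) = r⁻¹ * ft h := by rw [map_smul]; rfl
  rw [hsm, abs_mul, abs_of_pos (inv_pos.mpr hr)] at hre
  have := mul_le_mul_of_nonneg_left hre (le_of_lt hr)
  rw [← mul_assoc, mul_inv_cancel₀ (ne_of_gt hr), one_mul] at this
  linarith [this]

lemma chiSub_le {F : Finset Z} {f₀ : Cp Z} {y : Z} (hy : y ∈ F)
    (hy0 : (f₀ : Z → ℝ) y ≠ 0) (f : (ℝ ∙ f₀) →L[ℝ] ℝ)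
    (hf : ∀ (c : ℝ) (hm : c • f₀ ∈ ℝ ∙ f₀), f ⟨c • f₀, hm⟩ = c) :
    chiSub (ℝ ∙ f₀) (rhoP F) f ≤ ENNReal.ofReal |(f₀ : Z → ℝ) y|⁻¹ := by
  simp only [chiSub, chi]
  refine iSup₂_le fun w hw => ?_
  obtain ⟨c, hc⟩ := Submodule.mem_span_singleton.mp w.2
  have hwc : w = ⟨c • f₀, by rw [hc]; exact w.2⟩ := Subtype.ext hc.symm
  have hfw : f w = c := by rw [hwc]; exact hf c _
  have hyabs : 0 < |(f₀ : Z → ℝ) y| := abs_pos.mpr hy0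
  have hball : rhoP F (c • f₀) ≤ 1 := by
    have : ((w : Cp Z)) = c • f₀ := hc.symm
    rw [← this]; exact hw
  have hcy : |c| * |(f₀ : Z → ℝ) y| ≤ 1 := by
    have h1 : |((c • f₀ : Cp Z) : Z → ℝ) y| ≤ rhoP F (c • f₀) := le_rhoP hy
    have h2 : ((c • f₀ : Cp Z) : Z → ℝ) y = c * (f₀ : Z → ℝ) y := rfl
    rw [h2, abs_mul] at h1
    exact le_trans h1 hball
  have hcle : |c| ≤ |(f₀ : Z → ℝ) y|⁻¹ := by
    rw [← one_div, le_div_iff₀ hyabs]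
    exact hcy
  rw [hfw]
  exact ENNReal.ofReal_le_ofReal hcle

end Aux

theorem statement17 {Z : Type*} [TopologicalSpace Z] [Nonempty Z] [T35Space Z]
    (f₀ : Cp Z)
    (hsup : ∀ x : Z, ∃ y : Z, |(f₀ : Z → ℝ) x| < |(f₀ : Z → ℝ) y|) :
    ¬ SNP (fun F : Finset Z => rhoP F) (ℝ ∙ f₀) := by
  classical
  intro hSNP
  obtain ⟨y₀, hy₀⟩ := hsup (Classical.arbitrary Z)
  have hy₀pos : 0 < |(f₀ : Z → ℝ) y₀| := lt_of_le_of_lt (abs_nonneg _) hy₀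
  have hy₀ne : (f₀ : Z → ℝ) y₀ ≠ 0 := abs_pos.mp hy₀pos
  -- the functional on the span sending c • f₀ to c
  let ev : Cp Z →L[ℝ] ℝ :=
    ⟨{ toFun := fun g => (g : Z → ℝ) y₀
       map_add' := fun g h => rfl
       map_smul' := fun c g => rfl },
     (continuous_apply y₀).comp continuous_subtype_val⟩
  let f : (ℝ ∙ f₀) →L[ℝ] ℝ := ((f₀ : Z → ℝ) y₀)⁻¹ • (ev.comp (ℝ ∙ f₀).subtypeL)
  have hf : ∀ (c : ℝ) (hm : c • f₀ ∈ ℝ ∙ f₀), f ⟨c • f₀, hm⟩ = c := by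
    intro c hm
    simp only [f, ContinuousLinearMap.smul_apply, ContinuousLinearMap.comp_apply,
      Submodule.subtypeL_apply, smul_eq_mul]
    have h1 : ev (⟨c • f₀, hm⟩ : (ℝ ∙ f₀)) = c * (f₀ : Z → ℝ) y₀ := rfl
    rw [h1]
    field_simp
  obtain ⟨F, hfin, ft, hft⟩ := hSNP f
  -- ρ_F(f₀) > 0
  have hFpos : 0 < rhoP F f₀ := by
    rcases lt_or_ge 0 (rhoP F f₀) with h | h
    · exact h
    exfalso
    have h0 : rhoP F f₀ = 0 := le_antisymm h (rhoP_nonneg F f₀)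
    obtain ⟨n, hn⟩ := ENNReal.exists_nat_gt hfin.ne
    have hmem : ((n : ℝ) • f₀ : Cp Z) ∈ ℝ ∙ f₀ :=
      Submodule.smul_mem _ _ (Submodule.mem_span_singleton_self f₀)
    have hρ : rhoP F ((n : ℝ) • f₀) ≤ 1 := by
      have := rhoP_smul_le F (n : ℝ) f₀
      rw [h0, mul_zero] at this
      linarith
    have hle : (n : ℝ≥0∞) ≤ chiSub (ℝ ∙ f₀) (rhoP F) f := by
      have hv : ENNReal.ofReal |f ⟨(n : ℝ) • f₀, hmem⟩| ≤ chiSub (ℝ ∙ f₀) (rhoP F) f := by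
        simp only [chiSub, chi]
        exact le_iSup₂ (f := fun (w : (ℝ ∙ f₀)) (_ : w ∈ {w : (ℝ ∙ f₀) | rhoP F ↑w ≤ 1}) =>
          ENNReal.ofReal |f w|) (⟨(n : ℝ) • f₀, hmem⟩ : (ℝ ∙ f₀)) hρ
      rwa [hf n hmem, abs_of_nonneg (Nat.cast_nonneg n), ENNReal.ofReal_natCast] at hv
    exact lt_irrefl _ (lt_of_le_of_lt hle hn)
  -- a maximizing point of F and the two points y₁, y₂ above the max
  have hFne : F.Nonempty := by
    rcases F.eq_empty_or_nonempty with h | h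
    · exfalso
      have : rhoP F f₀ ≤ 0 := rhoP_le le_rfl (by simp [h])
      linarith
    · exact h
  obtain ⟨x₀, hx₀F, hx₀max⟩ := F.exists_max_image (fun x => |(f₀ : Z → ℝ) x|) hFne
  have hFle : rhoP F f₀ ≤ |(f₀ : Z → ℝ) x₀| := rhoP_le (abs_nonneg _) hx₀max
  obtain ⟨y₁, hy₁⟩ := hsup x₀
  obtain ⟨y₂, hy₂⟩ := hsup y₁
  have h1 : rhoP F f₀ < |(f₀ : Z → ℝ) y₁| := lt_of_le_of_lt hFle hy₁
  have hy₁pos : 0 < |(f₀ : Z → ℝ) y₁| := lt_of_le_of_lt (rhoP_nonneg F f₀) h1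
  have hy₂pos : 0 < |(f₀ : Z → ℝ) y₂| := lt_trans hy₁pos hy₂
  have hy₁ne : (f₀ : Z → ℝ) y₁ ≠ 0 := abs_pos.mp hy₁pos
  have hy₂ne : (f₀ : Z → ℝ) y₂ ≠ 0 := abs_pos.mp hy₂pos
  have hy₁F : y₁ ∉ F := fun h => absurd (hx₀max y₁ h) (not_le.mpr hy₁)
  have hy₁y₂ : y₁ ≠ y₂ := fun h => by rw [h] at hy₂; exact lt_irrefl _ hy₂
  -- a bump function: 1 at y₁, 0 on insert y₂ F
  have hK : IsClosed ((insert y₂ F : Finset Z) : Set Z) :=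
    (Finset.finite_toSet _).isClosed
  have hy₁K : y₁ ∉ ((insert y₂ F : Finset Z) : Set Z) := by
    simp only [Finset.coe_insert, Set.mem_insert_iff, Finset.mem_coe]
    push_neg
    exact ⟨hy₁y₂, hy₁F⟩
  obtain ⟨u, hu_cont, hu0, hu1⟩ :=
    CompletelyRegularSpace.completely_regular y₁ _ hK hy₁K
  let gC : Cp Z := ⟨fun z => 1 - (u z : ℝ),
    continuous_const.sub (continuous_subtype_val.comp hu_cont)⟩
  have hg1 : (gC : Z → ℝ) y₁ = 1 := by
    show 1 - ((u y₁ : unitInterval) : ℝ) = 1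
    rw [hu0]
    norm_num
  have hg0 : ∀ x ∈ insert y₂ F, (gC : Z → ℝ) x = 0 := by
    intro x hx
    show 1 - ((u x : unitInterval) : ℝ) = 0
    have : u x = 1 := hu1 (by exact_mod_cast hx)
    rw [this]
    norm_num
  -- the two Hahn-Banach extension facts
  have hmono : ∀ y : Z, ∀ v, rhoP F v ≤ rhoP (insert y F) v := fun y v =>
    rhoP_le (rhoP_nonneg _ _) fun x hx => le_rhoP (Finset.mem_insert_of_mem hx)
  obtain ⟨⟨hext1, hchi1⟩, -⟩ := hft (insert y₁ F) (hmono y₁)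
  obtain ⟨⟨hext2, hchi2⟩, -⟩ := hft (insert y₂ F) (hmono y₂)
  -- ft f₀ = 1
  have hmemf₀ : f₀ ∈ ℝ ∙ f₀ := Submodule.mem_span_singleton_self f₀
  have hftf₀ : ft f₀ = 1 := by
    have h1' : ft f₀ = f ⟨f₀, hmemf₀⟩ := by rw [← hext1]; rfl
    have h2' : (⟨f₀, hmemf₀⟩ : (ℝ ∙ f₀)) = ⟨(1 : ℝ) • f₀, by simpa using hmemf₀⟩ :=
      Subtype.ext (one_smul ℝ f₀).symm
    rw [h1', h2', hf]
  -- the chi bounds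
  have hb1 : chi (rhoP (insert y₁ F)) ft ≤ ENNReal.ofReal |(f₀ : Z → ℝ) y₁|⁻¹ :=
    hchi1.le.trans (chiSub_le (Finset.mem_insert_self y₁ F) hy₁ne f hf)
  have hb2 : chi (rhoP (insert y₂ F)) ft ≤ ENNReal.ofReal |(f₀ : Z → ℝ) y₂|⁻¹ :=
    hchi2.le.trans (chiSub_le (Finset.mem_insert_self y₂ F) hy₂ne f hf)
  -- ft gC = 0
  have hbt : ∀ t : ℝ, |1 + t * ft gC| ≤ 1 := by
    intro t
    have hρ : rhoP (insert y₂ F) (f₀ + t • gC) ≤ |(f₀ : Z → ℝ) y₂| := by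
      refine rhoP_le (abs_nonneg _) fun x hx => ?_
      have hco : ((f₀ + t • gC : Cp Z) : Z → ℝ) x
          = (f₀ : Z → ℝ) x + t * (gC : Z → ℝ) x := rfl
      rw [hco, hg0 x hx, mul_zero, add_zero]
      rcases Finset.mem_insert.mp hx with h | h
      · rw [h]
      · exact le_of_lt (lt_trans (lt_of_le_of_lt (le_rhoP h) h1) hy₂)
    have hbd := chi_bound (inv_nonneg.mpr (abs_nonneg _)) hb2 hy₂pos hρ
    rw [inv_mul_cancel₀ (ne_of_gt hy₂pos)] at hbd
    have happ : ft (f₀ + t • gC) = ft f₀ + t * ft gC := by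
      rw [map_add, map_smul]; rfl
    rwa [happ, hftf₀] at hbd
  have hgC0 : ft gC = 0 := by
    by_contra hne
    have := hbt (ft gC)⁻¹
    rw [inv_mul_cancel₀ hne] at this
    norm_num at this
  -- the contradiction
  have hρh : rhoP (insert y₁ F) (f₀ - ((f₀ : Z → ℝ) y₁) • gC) ≤ rhoP F f₀ := by
    refine rhoP_le (rhoP_nonneg _ _) fun x hx => ?_
    have hco : ((f₀ - ((f₀ : Z → ℝ) y₁) • gC : Cp Z) : Z → ℝ) x
        = (f₀ : Z → ℝ) x - (f₀ : Z → ℝ) y₁ * (gC : Z → ℝ) x := rfl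
    rcases Finset.mem_insert.mp hx with h | h
    · rw [hco, h, hg1, mul_one, sub_self, abs_zero]
      exact le_of_lt hFpos
    · rw [hco, hg0 x (Finset.mem_insert_of_mem h), mul_zero, sub_zero]
      exact le_rhoP h
  have hfth := chi_bound (inv_nonneg.mpr (abs_nonneg _)) hb1 hFpos hρh
  have hfth1 : ft (f₀ - ((f₀ : Z → ℝ) y₁) • gC) = 1 := by
    rw [map_sub, map_smul, hftf₀, hgC0]
    simp
  rw [hfth1, abs_one] at hfth
  have hlt : |(f₀ : Z → ℝ) y₁|⁻¹ * rhoP F f₀ < 1 := by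
    have := mul_lt_mul_of_pos_left h1 (inv_pos.mpr hy₁pos)
    rwa [inv_mul_cancel₀ (ne_of_gt hy₁pos)] at this
  linarith
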